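/- For λ, η > 0, the function φ(ṽ,v̂) = ρ_φ · (λ q(v̂) ψ(ṽ|v̂) + η ψ_q(ṽ) q(v̂))/(λ+η) belongs to ker(𝓛̂_q) ∩ ker(𝓛̃_ψ) for all λ, η, but belongs to ker(𝓛) only if λ = μ̃ and η = μ̂ (up to common scaling, i.e., λ/η = μ̃/μ̂). In particular the inclusion ker(𝓛) ⊆ ker(𝓛̂_q) ∩ ker(𝓛̃_ψ) is in general strict. -/

import Mathlib

open MeasureTheory Set

noncomputable section

abbrev Sd (d : ℕ) : Type := ↥(Metric.sphere (0 : EuclideanSpace ℝ (Fin d)) 1)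

/-- `ψ_q(ṽ) = ∫_{S^{d-1}} ψ(ṽ|v̂) q(v̂) dv̂`. -/
noncomputable def psiq {d : ℕ} (σ : Measure (Sd d)) (ψ : ℝ → Sd d → ℝ) (q : Sd d → ℝ)
    (v : ℝ) : ℝ :=
  ∫ ω, ψ v ω * q ω ∂σ

/-- `ψ_q^c(ṽ|v̂) = (μ̂ ψ_q(ṽ) + μ̃ ψ(ṽ|v̂))/(μ̂ + μ̃)`. -/
noncomputable def psiqc {d : ℕ} (σ : Measure (Sd d)) (ψ : ℝ → Sd d → ℝ) (q : Sd d → ℝ)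
    (μhat μtil : ℝ) (v : ℝ) (ω : Sd d) : ℝ :=
  (μhat * psiq σ ψ q v + μtil * ψ v ω) / (μhat + μtil)

/-- `T(ṽ,v̂) = q(v̂) ψ_q^c(ṽ|v̂)`. -/
noncomputable def Tker {d : ℕ} (σ : Measure (Sd d)) (ψ : ℝ → Sd d → ℝ) (q : Sd d → ℝ)
    (μhat μtil : ℝ) (v : ℝ) (ω : Sd d) : ℝ :=
  q ω * psiqc σ ψ q μhat μtil v ω

/-- Total mass `ρ_φ = ∫_𝒱 φ` (iterated integral). -/
noncomputable def massOf {d : ℕ} (σ : Measure (Sd d)) (φ : ℝ → Sd d → ℝ) : ℝ :=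
  ∫ v in Ioi (0:ℝ), (∫ ω, φ v ω ∂σ)

/-- Speed marginal `ρ_φ φ̃(ṽ) = ∫_{S^{d-1}} φ(ṽ,v̂) dv̂`. -/
noncomputable def margS {d : ℕ} (σ : Measure (Sd d)) (φ : ℝ → Sd d → ℝ) (v : ℝ) : ℝ :=
  ∫ ω, φ v ω ∂σ

/-- Direction marginal `ρ_φ φ̂(v̂) = ∫_{ℝ₊} φ(ṽ,v̂) dṽ`. -/
noncomputable def margD {d : ℕ} (φ : ℝ → Sd d → ℝ) (ω : Sd d) : ℝ :=
  ∫ v in Ioi (0:ℝ), φ v ω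

/-- The combined scattering operator
`𝓛φ = μ̂ ρ_φ φ̃ q + μ̃ ρ_φ φ̂ ψ − (μ̂+μ̃) φ`. -/
noncomputable def Lop {d : ℕ} (σ : Measure (Sd d)) (ψ : ℝ → Sd d → ℝ) (q : Sd d → ℝ)
    (μhat μtil : ℝ) (φ : ℝ → Sd d → ℝ) (v : ℝ) (ω : Sd d) : ℝ :=
  μhat * margS σ φ v * q ω + μtil * margD φ ω * ψ v ω - (μhat + μtil) * φ v ω

/-- Marginal direction operator
`𝓛̂_q φ(v̂) = μ̂ ∫_{ℝ₊} ( q(v̂)∫_{S^{d-1}} φ(ṽ,v̂′)dv̂′ − φ(ṽ,v̂) ) dṽ`. -/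
noncomputable def LhatQ {d : ℕ} (σ : Measure (Sd d)) (q : Sd d → ℝ) (μhat : ℝ)
    (φ : ℝ → Sd d → ℝ) (ω : Sd d) : ℝ :=
  μhat * ∫ v in Ioi (0:ℝ), (q ω * (∫ ω', φ v ω' ∂σ) - φ v ω)

/-- Marginal speed operator
`𝓛̃_ψ φ(ṽ) = μ̃ ∫_{S^{d-1}} ( ψ(ṽ|v̂)∫_{ℝ₊} φ(ṽ′,v̂)dṽ′ − φ(ṽ,v̂) ) dv̂`. -/
noncomputable def LtilPsi {d : ℕ} (σ : Measure (Sd d)) (ψ : ℝ → Sd d → ℝ) (μtil : ℝ)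
    (φ : ℝ → Sd d → ℝ) (v : ℝ) : ℝ :=
  μtil * ∫ ω, (ψ v ω * (∫ v' in Ioi (0:ℝ), φ v' ω) - φ v ω) ∂σ

/-- The two-parameter family `φ_{λ,η} = ρ (λ qψ + η ψ_q q)/(λ+η)`. -/
noncomputable def phiLE {d : ℕ} (σ : Measure (Sd d)) (ψ : ℝ → Sd d → ℝ) (q : Sd d → ℝ)
    (ρ lam eta : ℝ) (v : ℝ) (ω : Sd d) : ℝ :=
  ρ * ((lam * (q ω * ψ v ω) + eta * (psiq σ ψ q v * q ω)) / (lam + eta))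

/-- for all `λ, η > 0` the function
`φ = ρ(λ q ψ + η ψ_q q)/(λ+η)` belongs to `ker(𝓛̂_q) ∩ ker(𝓛̃_ψ)`, but (provided `ψ`
genuinely depends on the direction, i.e. `qψ ≠ qψ_q`, and `ρ ≠ 0`) it belongs to
`ker(𝓛)` only if `λ μ̂ = η μ̃` (i.e. `λ/η = μ̃/μ̂`).  In particular the inclusion
`ker(𝓛) ⊆ ker(𝓛̂_q) ∩ ker(𝓛̃_ψ)` is in general strict. -/
theorem stmt_5 {d : ℕ} (σ : Measure (Sd d)) [SFinite σ]
    (ψ : ℝ → Sd d → ℝ) (q : Sd d → ℝ) (μhat μtil : ℝ)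
    (hμhat : 0 < μhat) (hμtil : 0 < μtil)
    (hψnn : ∀ v ω, 0 ≤ ψ v ω) (hqnn : ∀ ω, 0 ≤ q ω)
    (hψint : ∀ ω, IntegrableOn (fun v => ψ v ω) (Ioi (0:ℝ)))
    (hqint : Integrable q σ)
    (hψnorm : ∀ ω, ∫ v in Ioi (0:ℝ), ψ v ω = 1)
    (hqnorm : ∫ ω, q ω ∂σ = 1)
    (hψqprod : ∀ v, Integrable (fun ω => ψ v ω * q ω) σ)
    (hψqint : IntegrableOn (psiq σ ψ q) (Ioi (0:ℝ)))
    (hψqnorm : ∫ v in Ioi (0:ℝ), psiq σ ψ q v = 1)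
    (ρ : ℝ) (hρ : ρ ≠ 0)
    (hneq : ∃ v ω, q ω * ψ v ω ≠ q ω * psiq σ ψ q v) :
    ∀ lam eta : ℝ, 0 < lam → 0 < eta →
      (∀ ω, LhatQ σ q μhat (phiLE σ ψ q ρ lam eta) ω = 0) ∧
      (∀ v, LtilPsi σ ψ μtil (phiLE σ ψ q ρ lam eta) v = 0) ∧
      ((∀ v ω, Lop σ ψ q μhat μtil (phiLE σ ψ q ρ lam eta) v ω = 0) →
        lam * μhat = eta * μtil) := by
  intro lam eta hlam heta
  have hle : lam + eta ≠ 0 := by positivity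
  set c1 : ℝ := ρ * lam / (lam + eta) with hc1
  set c2 : ℝ := ρ * eta / (lam + eta) with hc2
  have hc12 : c1 + c2 = ρ := by rw [hc1, hc2, ← add_div, ← mul_add, mul_div_assoc, div_self hle, mul_one]
  have hphi : ∀ v ω, phiLE σ ψ q ρ lam eta v ω
      = c1 * (ψ v ω * q ω) + (c2 * psiq σ ψ q v) * q ω := by
    intro v ω; simp only [phiLE, hc1, hc2]; field_simp
  -- integrability in ω for fixed v
  have hintω : ∀ v, Integrable (fun ω => phiLE σ ψ q ρ lam eta v ω) σ := by
    intro v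
    have h := ((hψqprod v).const_mul c1).add (hqint.const_mul (c2 * psiq σ ψ q v))
    exact h.congr (Filter.Eventually.of_forall fun ω => (hphi v ω).symm)
  -- integrability in v for fixed ω
  have hintv : ∀ ω, IntegrableOn (fun v => phiLE σ ψ q ρ lam eta v ω) (Ioi (0:ℝ)) := by
    intro ω
    have h := (((hψint ω).const_mul (c1 * q ω)).add (hψqint.const_mul (c2 * q ω)))
    exact h.congr (Filter.Eventually.of_forall fun v => by simp only [Pi.add_apply, hphi]; ring)
  -- speed marginal
  have hmargS : ∀ v, margS σ (phiLE σ ψ q ρ lam eta) v = ρ * psiq σ ψ q v := by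
    intro v
    unfold margS
    simp only [hphi]
    rw [integral_add ((hψqprod v).const_mul c1) (hqint.const_mul _),
      integral_const_mul, integral_const_mul, hqnorm]
    have : (∫ ω, ψ v ω * q ω ∂σ) = psiq σ ψ q v := rfl
    rw [this]
    linear_combination psiq σ ψ q v * hc12
  -- direction marginal
  have hmargD : ∀ ω, margD (phiLE σ ψ q ρ lam eta) ω = ρ * q ω := by
    intro ω
    unfold margD
    have heq : ∀ v : ℝ, phiLE σ ψ q ρ lam eta v ω
        = (c1 * q ω) * ψ v ω + (c2 * q ω) * psiq σ ψ q v := by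
      intro v; rw [hphi]; ring
    rw [setIntegral_congr_fun measurableSet_Ioi (fun v _ => heq v)]
    rw [integral_add ((hψint ω).const_mul (c1 * q ω)) (hψqint.const_mul (c2 * q ω)),
      integral_const_mul, integral_const_mul, hψnorm, hψqnorm]
    linear_combination q ω * hc12
  refine ⟨?_, ?_, ?_⟩
  · -- LhatQ kernel
    intro ω
    unfold LhatQ
    have heq : ∀ v ∈ Ioi (0:ℝ),
        q ω * (∫ ω', phiLE σ ψ q ρ lam eta v ω' ∂σ) - phiLE σ ψ q ρ lam eta v ω
        = q ω * (ρ * psiq σ ψ q v) - phiLE σ ψ q ρ lam eta v ω := by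
      intro v _; rw [show (∫ ω', phiLE σ ψ q ρ lam eta v ω' ∂σ) = margS σ (phiLE σ ψ q ρ lam eta) v from rfl, hmargS]
    rw [setIntegral_congr_fun measurableSet_Ioi heq]
    rw [integral_sub ((hψqint.const_mul ρ).const_mul (q ω)) (hintv ω)]
    have h1 : (∫ v in Ioi (0:ℝ), q ω * (ρ * psiq σ ψ q v)) = q ω * ρ := by
      rw [show (fun v => q ω * (ρ * psiq σ ψ q v)) = fun v => (q ω * ρ) * psiq σ ψ q v from funext fun v => by ring,
        integral_const_mul, hψqnorm, mul_one]
    have h2 : (∫ v in Ioi (0:ℝ), phiLE σ ψ q ρ lam eta v ω) = ρ * q ω := hmargD ω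
    rw [h1, h2]; ring
  · -- LtilPsi kernel
    intro v
    unfold LtilPsi
    have heq : ∀ ω : Sd d,
        ψ v ω * (∫ v' in Ioi (0:ℝ), phiLE σ ψ q ρ lam eta v' ω) - phiLE σ ψ q ρ lam eta v ω
        = (ρ * (ψ v ω * q ω)) - phiLE σ ψ q ρ lam eta v ω := by
      intro ω
      rw [show (∫ v' in Ioi (0:ℝ), phiLE σ ψ q ρ lam eta v' ω) = margD (phiLE σ ψ q ρ lam eta) ω from rfl, hmargD]
      ring
    rw [integral_congr_ae (Filter.Eventually.of_forall heq)]
    rw [integral_sub ((hψqprod v).const_mul ρ) (hintω v)]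
    have h1 : (∫ ω, ρ * (ψ v ω * q ω) ∂σ) = ρ * psiq σ ψ q v := by
      rw [integral_const_mul]; rfl
    have h2 : (∫ ω, phiLE σ ψ q ρ lam eta v ω ∂σ) = ρ * psiq σ ψ q v := hmargS v
    rw [h1, h2]; ring
  · -- necessity of lam μhat = eta μtil
    intro hL
    obtain ⟨v, ω, hvw⟩ := hneq
    have h := hL v ω
    unfold Lop at h
    rw [hmargS v, hmargD ω] at h
    simp only [phiLE] at h
    have key : ρ * (eta * μtil - lam * μhat) * (q ω * ψ v ω - q ω * psiq σ ψ q v) = 0 := by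
      field_simp at h
      nlinarith [h]
    have hsub : q ω * ψ v ω - q ω * psiq σ ψ q v ≠ 0 := sub_ne_zero.mpr hvw
    have : ρ * (eta * μtil - lam * μhat) = 0 := by
      rcases mul_eq_zero.mp key with h' | h'
      · exact h'
      · exact absurd h' hsub
    rcases mul_eq_zero.mp this with h' | h'
    · exact absurd h' hρ
    · linarith

end
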